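/- For every R ∈ 𝔯(V), writing Ric := Ric(R), Ric* := Ric*(R), τ := τ(R): (1) Ric*(π₁(R)) = (τ/n) g; (2) Ric*(π₂(R)) = (1/(n−1))[(τ/n) g − S Ric]; (3) Ric*(π₃(R)) = (−3/(n+1)) Λ Ric; (4) Ric*(π₄(R)) = Λ(Ric* + (3/(n+1)) Ric); (5) Ric*(π₅(R)) = (−τ/(n−1)) g + S((1/(n−1)) Ric + Ric*); (6) Ric*(π_j(R)) = 0 for j = 6, 7, 8; (7) the g-trace of Ric*(π_j(R)) vanishes for j = 2, …, 8. -/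

import Mathlib

open scoped BigOperators
open Pointwise

namespace GCT

variable {V : Type*} [AddCommGroup V] [Module ℝ V]

/-- Linearity of a real valued function of one vector variable. -/
def IsLin (f : V → ℝ) : Prop :=
  (∀ x y : V, f (x + y) = f x + f y) ∧ (∀ (c : ℝ) (x : V), f (c • x) = c * f x)

/-- Bilinearity. -/
def IsBilin (h : V → V → ℝ) : Prop :=
  (∀ y, IsLin (fun x => h x y)) ∧ (∀ x, IsLin (fun y => h x y))

/-- 4-linearity. -/
def IsMulti4 (F : V → V → V → V → ℝ) : Prop :=
  (∀ y z w, IsLin (fun x => F x y z w)) ∧ (∀ x z w, IsLin (fun y => F x y z w)) ∧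
    (∀ x y w, IsLin (fun z => F x y z w)) ∧ (∀ x y z, IsLin (fun w => F x y z w))

/-- The space 𝔯(V) of generalized curvature tensors. -/
def rSet (V : Type*) [AddCommGroup V] [Module ℝ V] : Set (V → V → V → V → ℝ) :=
  {F | IsMulti4 F ∧ (∀ x y z w, F x y z w = - F y x z w) ∧
    (∀ x y z w, F x y z w + F y z x w + F z x y w = 0)}

/-- The space 𝔞(V) of algebraic curvature tensors. -/
def aSet (V : Type*) [AddCommGroup V] [Module ℝ V] : Set (V → V → V → V → ℝ) :=
  {F | F ∈ rSet V ∧ ∀ x y z w, F x y z w = - F x y w z}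

/-- The space 𝔰(V). -/
def sSet (V : Type*) [AddCommGroup V] [Module ℝ V] : Set (V → V → V → V → ℝ) :=
  {F | F ∈ rSet V ∧ ∀ x y z w, F x y z w = F x y w z}

/-- The conjugate tensor R*. -/
def conj (F : V → V → V → V → ℝ) : V → V → V → V → ℝ := fun x y z w => - F x y w z

/-- The product h·k of two bilinear forms. -/
def prodB (h k : V → V → ℝ) : V → V → V → V → ℝ := fun x y z w => h x y * k z w

/-- The wedge product h ∧_t k of two bilinear forms. -/
def wedge (t : ℝ) (h k : V → V → ℝ) : V → V → V → V → ℝ :=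
  fun x y z w => h x z * k y w - h y z * k x w - t * (h x w * k y z - h y w * k x z)

/-- Antisymmetric part Λh. -/
noncomputable def lamB (h : V → V → ℝ) : V → V → ℝ := fun x y => (h x y - h y x) / 2

/-- Symmetric part Sh. -/
noncomputable def symB (h : V → V → ℝ) : V → V → ℝ := fun x y => (h x y + h y x) / 2

/-- The idempotent ψ. -/
noncomputable def psi (F : V → V → V → V → ℝ) : V → V → V → V → ℝ :=
  fun x y z w => (F x y z w + F y x w z + F z w x y + F w z y x) / 4

/-- The idempotent μ. -/
noncomputable def mu (F : V → V → V → V → ℝ) : V → V → V → V → ℝ :=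
  fun x y z w =>
    (3 * F x y z w + 3 * F x y w z + F x w z y + F x z w y + F w y z x + F z y w x) / 8

/-- A linear equivalence is a g-isometry. -/
def IsIsometry (g : V → V → ℝ) (φ : V ≃ₗ[ℝ] V) : Prop := ∀ x y, g (φ x) (φ y) = g x y

/-- Pull back of a 4-tensor along a linear equivalence (the natural action). -/
def pullT (φ : V ≃ₗ[ℝ] V) (F : V → V → V → V → ℝ) : V → V → V → V → ℝ :=
  fun x y z w => F (φ x) (φ y) (φ z) (φ w)

/-- Invariance of a set of 4-tensors under the orthogonal group O(V,g). -/
def OInv (g : V → V → ℝ) (S : Set (V → V → V → V → ℝ)) : Prop :=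
  ∀ φ : V ≃ₗ[ℝ] V, IsIsometry g φ → ∀ F ∈ S, pullT φ F ∈ S

/-- Irreducibility of a subspace of 4-tensors as an O(V,g)-module:
there is no proper nonzero invariant subspace. -/
def OIrred (g : V → V → ℝ) (W : Set (V → V → V → V → ℝ)) : Prop :=
  ∀ U : Submodule ℝ (V → V → V → V → ℝ), (U : Set (V → V → V → V → ℝ)) ⊆ W →
    (∀ φ : V ≃ₗ[ℝ] V, IsIsometry g φ → ∀ F ∈ U, pullT φ F ∈ U) →
    (U : Set (V → V → V → V → ℝ)) = {0} ∨ (U : Set (V → V → V → V → ℝ)) = W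

/-- Isomorphism of two invariant subspaces as O(V,g)-modules. -/
def OEquivMod (g : V → V → ℝ) (S T : Set (V → V → V → V → ℝ)) : Prop :=
  ∃ e : (V → V → V → V → ℝ) →ₗ[ℝ] (V → V → V → V → ℝ),
    Set.BijOn e S T ∧
      ∀ φ : V ≃ₗ[ℝ] V, IsIsometry g φ → ∀ F ∈ S, e (pullT φ F) = pullT φ (e F)

variable (n : ℕ) (b : Module.Basis (Fin n) ℝ V) (g : V → V → ℝ)

/-- Inverse metric components g^{ij}. -/
noncomputable def ginv : Matrix (Fin n) (Fin n) ℝ :=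
  (Matrix.of fun i j => g (b i) (b j))⁻¹

/-- Ric(R)(x,y) := Σ g^{ij} R(e_i,x,y,e_j). -/
noncomputable def Ric (F : V → V → V → V → ℝ) : V → V → ℝ :=
  fun x y => ∑ i, ∑ j, ginv n b g i j * F (b i) x y (b j)

/-- Ric*(R)(x,y) := Σ g^{ij} R(x,e_i,e_j,y). -/
noncomputable def RicS (F : V → V → V → V → ℝ) : V → V → ℝ :=
  fun x y => ∑ i, ∑ j, ginv n b g i j * F x (b i) (b j) y

/-- The generalized scalar curvature τ(R). -/
noncomputable def tau (F : V → V → V → V → ℝ) : ℝ :=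
  ∑ i, ∑ j, ∑ k, ∑ l, ginv n b g i l * ginv n b g j k * F (b i) (b j) (b k) (b l)

/-- The g-trace of a bilinear form. -/
noncomputable def trg (h : V → V → ℝ) : ℝ := ∑ i, ∑ j, ginv n b g i j * h (b i) (b j)

/-- The scalar product on 4-tensors given by full contraction with g. -/
noncomputable def inner4 (F T : V → V → V → V → ℝ) : ℝ :=
  ∑ i, ∑ j, ∑ k, ∑ l, ∑ i', ∑ j', ∑ k', ∑ l',
    ginv n b g i i' * ginv n b g j j' * ginv n b g k k' * ginv n b g l l' *
      F (b i) (b j) (b k) (b l) * T (b i') (b j') (b k') (b l')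

/-- W-projection π₁. -/
noncomputable def pi1 (F : V → V → V → V → ℝ) : V → V → V → V → ℝ :=
  (-(tau n b g F) / ((n : ℝ) * ((n : ℝ) - 1))) • wedge 0 g g

/-- W-projection π₂. -/
noncomputable def pi2 (F : V → V → V → V → ℝ) : V → V → V → V → ℝ :=
  ((1 : ℝ) / ((n : ℝ) - 1)) • wedge 0 (((tau n b g F) / (n : ℝ)) • g - symB (Ric n b g F)) g

/-- W-projection π₃. -/
noncomputable def pi3 (F : V → V → V → V → ℝ) : V → V → V → V → ℝ :=
  ((-1 : ℝ) / ((n : ℝ) + 1)) •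
    ((2 : ℝ) • prodB (lamB (Ric n b g F)) g + wedge 0 (lamB (Ric n b g F)) g)

/-- W-projection π₄. -/
noncomputable def pi4 (F : V → V → V → V → ℝ) : V → V → V → V → ℝ :=
  ((-1 : ℝ) / ((n : ℝ) ^ 2 - 4)) •
      ((2 : ℝ) • prodB (lamB (RicS n b g F)) g + wedge ((n : ℝ) + 1) (lamB (RicS n b g F)) g)
    - ((3 : ℝ) / (((n : ℝ) ^ 2 - 4) * ((n : ℝ) + 1))) •
      ((2 : ℝ) • prodB (lamB (Ric n b g F)) g + wedge ((n : ℝ) + 1) (lamB (Ric n b g F)) g)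

/-- W-projection π₅. -/
noncomputable def pi5 (F : V → V → V → V → ℝ) : V → V → V → V → ℝ :=
  ((1 : ℝ) / (((n : ℝ) - 1) * ((n : ℝ) - 2))) •
    ((tau n b g F) • wedge 0 g g -
      ((1 : ℝ) / (n : ℝ)) •
        wedge ((n : ℝ) - 1) (symB (Ric n b g F + ((n : ℝ) - 1) • RicS n b g F)) g)

/-- W-projection π₆. -/
noncomputable def pi6 (F : V → V → V → V → ℝ) : V → V → V → V → ℝ :=
  psi F + ((1 : ℝ) / (2 * ((n : ℝ) - 2))) • wedge 1 (symB (Ric n b g F + RicS n b g F)) g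
    - ((tau n b g F) / (((n : ℝ) - 1) * ((n : ℝ) - 2))) • wedge 0 g g

/-- W-projection π₇. -/
noncomputable def pi7 (F : V → V → V → V → ℝ) : V → V → V → V → ℝ :=
  mu F + ((1 : ℝ) / (2 * (n : ℝ))) • wedge (-1) (symB (Ric n b g F - RicS n b g F)) g
    + ((1 : ℝ) / (2 * ((n : ℝ) + 2))) • prodB (lamB ((3 : ℝ) • Ric n b g F - RicS n b g F)) g
    + ((1 : ℝ) / (4 * ((n : ℝ) + 2))) • wedge (-1) (lamB ((3 : ℝ) • Ric n b g F - RicS n b g F)) g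

/-- W-projection π₈. -/
noncomputable def pi8 (F : V → V → V → V → ℝ) : V → V → V → V → ℝ :=
  F - psi F - mu F
    + ((1 : ℝ) / (2 * ((n : ℝ) - 2))) • prodB (lamB (Ric n b g F + RicS n b g F)) g
    + ((1 : ℝ) / (4 * ((n : ℝ) - 2))) • wedge 3 (lamB (Ric n b g F + RicS n b g F)) g

/-- A-projection α₁. -/
noncomputable def al1 (F : V → V → V → V → ℝ) : V → V → V → V → ℝ :=
  (-(tau n b g F) / ((n : ℝ) * ((n : ℝ) - 1))) • wedge 0 g g

/-- A-projection α₂. -/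
noncomputable def al2 (F : V → V → V → V → ℝ) : V → V → V → V → ℝ :=
  ((-1 : ℝ) / (2 * ((n : ℝ) - 2))) • wedge 1 (symB (Ric n b g F + RicS n b g F)) g
    + ((2 * tau n b g F) / ((n : ℝ) * ((n : ℝ) - 2))) • wedge 0 g g

/-- A-projection α₃. -/
noncomputable def al3 (F : V → V → V → V → ℝ) : V → V → V → V → ℝ :=
  ((-1 : ℝ) / (2 * (n : ℝ))) • wedge (-1) (symB (Ric n b g F - RicS n b g F)) g

/-- A-projection α₄. -/
noncomputable def al4 (F : V → V → V → V → ℝ) : V → V → V → V → ℝ :=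
  ((-1 : ℝ) / (4 * ((n : ℝ) + 2))) •
    ((2 : ℝ) • prodB (lamB ((3 : ℝ) • Ric n b g F - RicS n b g F)) g
      + wedge (-1) (lamB ((3 : ℝ) • Ric n b g F - RicS n b g F)) g)

/-- A-projection α₅. -/
noncomputable def al5 (F : V → V → V → V → ℝ) : V → V → V → V → ℝ :=
  ((-1 : ℝ) / (4 * ((n : ℝ) - 2))) •
    ((2 : ℝ) • prodB (lamB (Ric n b g F + RicS n b g F)) g
      + wedge 3 (lamB (Ric n b g F + RicS n b g F)) g)

/-- A-projection α₆. -/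
noncomputable def al6 (F : V → V → V → V → ℝ) : V → V → V → V → ℝ :=
  psi F - al1 n b g F - al2 n b g F

/-- A-projection α₇. -/
noncomputable def al7 (F : V → V → V → V → ℝ) : V → V → V → V → ℝ :=
  mu F - al3 n b g F - al4 n b g F

/-- A-projection α₈. -/
noncomputable def al8 (F : V → V → V → V → ℝ) : V → V → V → V → ℝ :=
  F - mu F - psi F - al5 n b g F

/-- Curvature tensors of constant curvature type. -/
noncomputable def uSet : Set (V → V → V → V → ℝ) :=
  {F | ∃ c : ℝ, ∀ x y z w, F x y z w = c * (g x w * g y z - g x z * g y w)}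

/-- Ricci traceless algebraic curvature tensors built from a traceless symmetric form. -/
noncomputable def zSet : Set (V → V → V → V → ℝ) :=
  {F | ∃ Xi : V → V → ℝ, IsBilin Xi ∧ (∀ x y, Xi x y = Xi y x) ∧ trg n b g Xi = 0 ∧
    ∀ x y z w, F x y z w = Xi x w * g y z + g x w * Xi y z - Xi x z * g y w - g x z * Xi y w}

/-- Weyl type (Ricci flat algebraic) curvature tensors. -/
noncomputable def wSet : Set (V → V → V → V → ℝ) :=
  {F | F ∈ aSet V ∧ Ric n b g F = fun _ _ => 0}

/-- The projective curvature tensor p(R). -/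
noncomputable def pProj (F : V → V → V → V → ℝ) : V → V → V → V → ℝ :=
  F - pi1 n b g F - pi2 n b g F - pi3 n b g F

lemma IsLin.zero' {f : V → ℝ} (hf : IsLin f) : f 0 = 0 := by
  have := hf.1 0 0; simp only [add_zero] at this; linarith

lemma IsLin.sum' {f : V → ℝ} (hf : IsLin f) {ι : Type*} (s : Finset ι) (c : ι → ℝ)
    (v : ι → V) : f (∑ i ∈ s, c i • v i) = ∑ i ∈ s, c i * f (v i) := by
  classical
  induction s using Finset.cons_induction with
  | empty => simpa using hf.zero'
  | cons a s ha ih => rw [Finset.sum_cons, Finset.sum_cons, hf.1, hf.2, ih]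

lemma IsLin.const_mul {f : V → ℝ} (hf : IsLin f) (c : ℝ) : IsLin (fun x => c * f x) := by
  refine ⟨fun x y => ?_, fun d x => ?_⟩
  · simp only [hf.1]; ring
  · simp only [hf.2]; ring

lemma IsLin.addf {f f' : V → ℝ} (hf : IsLin f) (hf' : IsLin f') :
    IsLin (fun x => f x + f' x) := by
  refine ⟨fun x y => ?_, fun d x => ?_⟩
  · simp only [hf.1, hf'.1]; ring
  · simp only [hf.2, hf'.2]; ring

lemma isLin_finsum {ι : Type*} (s : Finset ι) (f : ι → V → ℝ)
    (h : ∀ i ∈ s, IsLin (f i)) : IsLin (fun x => ∑ i ∈ s, f i x) := by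
  classical
  induction s using Finset.cons_induction with
  | empty => exact ⟨fun x y => by simp, fun c x => by simp⟩
  | cons a s ha ih =>
      simp only [Finset.sum_cons]
      exact (h a (Finset.mem_cons_self a s)).addf
        (ih fun i hi => h i (Finset.mem_cons.2 (Or.inr hi)))

/-- Bundled hypotheses on the metric. -/
structure Setup (n : ℕ) (b : Module.Basis (Fin n) ℝ V) (g : V → V → ℝ) : Prop where
  hgb : IsBilin g
  hgs : ∀ x y, g x y = g y x
  hGi : ginv n b g * (Matrix.of fun i j => g (b i) (b j)) = 1
  gs : ∀ i j, ginv n b g i j = ginv n b g j i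

lemma setup_of (n : ℕ) (b : Module.Basis (Fin n) ℝ V) (g : V → V → ℝ)
    (hgb : IsBilin g) (hgs : ∀ x y, g x y = g y x)
    (hgnd : ∀ x : V, (∀ y : V, g x y = 0) → x = 0) : Setup n b g := by
  classical
  set G : Matrix (Fin n) (Fin n) ℝ := Matrix.of fun i j => g (b i) (b j) with hG
  have hdet : IsUnit G.det := by
    by_contra hdu
    have hd0 : G.det = 0 := by
      rcases eq_or_ne G.det 0 with h | h
      · exact h
      · exact absurd (isUnit_iff_ne_zero.2 h) hdu
    obtain ⟨v, hv0, hv⟩ := Matrix.exists_mulVec_eq_zero_iff.2 hd0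
    set x : V := ∑ i, v i • b i with hx
    have hxg : ∀ i, g (b i) x = 0 := by
      intro i
      have : g (b i) x = ∑ j, v j * g (b i) (b j) := (hgb.2 (b i)).sum' _ _ _
      rw [this]
      have := congrFun hv i
      simpa [Matrix.mulVec, dotProduct, hG, mul_comm] using this
    have hxall : ∀ y : V, g x y = 0 := by
      intro y
      conv_lhs => rw [← b.sum_repr y]
      rw [(hgb.2 x).sum']
      refine Finset.sum_eq_zero fun i _ => ?_
      rw [hgs, hxg, mul_zero]
    have : x = 0 := hgnd x hxall
    have h2 : ∑ i, v i • b i = 0 := by rw [← hx]; exact this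
    exact hv0 (funext (Fintype.linearIndependent_iff.1 b.linearIndependent v h2))
  have h1 : ginv n b g * G = 1 := Matrix.nonsing_inv_mul G hdet
  have hGt : G.transpose = G := by
    ext i j; simp [hG, Matrix.transpose_apply, hgs]
  refine ⟨hgb, hgs, h1, ?_⟩
  intro i j
  have hsym : (ginv n b g).transpose = ginv n b g := by
    calc (ginv n b g).transpose = (G⁻¹).transpose := rfl
      _ = (G.transpose)⁻¹ := Matrix.transpose_nonsing_inv G
      _ = G⁻¹ := by rw [hGt]
  conv_lhs => rw [← hsym]
  rfl
lemma ginv_g (S : Setup n b g) (x : V) (j : Fin n) :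
    ∑ i, ginv n b g i j * g (b i) x = b.repr x j := by
  have hx : ∀ i, g (b i) x = ∑ k, b.repr x k * g (b i) (b k) := by
    intro i
    conv_lhs => rw [← b.sum_repr x]
    exact (S.hgb.2 (b i)).sum' _ _ _
  calc ∑ i, ginv n b g i j * g (b i) x
      = ∑ i, ∑ k, b.repr x k * (ginv n b g j i * g (b i) (b k)) := by
        refine Finset.sum_congr rfl fun i _ => ?_
        rw [hx i, Finset.mul_sum]
        exact Finset.sum_congr rfl fun k _ => by rw [S.gs i j]; ring
    _ = ∑ k, b.repr x k * (∑ i, ginv n b g j i * g (b i) (b k)) := by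
        rw [Finset.sum_comm]
        exact Finset.sum_congr rfl fun k _ => (Finset.mul_sum _ _ _).symm
    _ = ∑ k, b.repr x k * (if j = k then 1 else 0) := by
        refine Finset.sum_congr rfl fun k _ => ?_
        congr 1
        have h := congrFun (congrFun S.hGi j) k
        simpa [Matrix.mul_apply, Matrix.one_apply] using h
    _ = b.repr x j := by simp

lemma dual (S : Setup n b g) (f : V → ℝ) (hf : IsLin f) (x : V) :
    ∑ i, ∑ j, ginv n b g i j * g (b i) x * f (b j) = f x := by
  calc ∑ i, ∑ j, ginv n b g i j * g (b i) x * f (b j)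
      = ∑ j, (∑ i, ginv n b g i j * g (b i) x) * f (b j) := by
        rw [Finset.sum_comm]
        exact Finset.sum_congr rfl fun j _ => by rw [Finset.sum_mul]
    _ = ∑ j, b.repr x j * f (b j) := by
        refine Finset.sum_congr rfl fun j _ => ?_
        rw [ginv_g n b g S]
    _ = f x := by
        conv_rhs => rw [← b.sum_repr x]
        exact (hf.sum' _ _ _).symm

lemma dual2 (S : Setup n b g) (f : V → ℝ) (hf : IsLin f) (x : V) :
    ∑ i, ∑ j, ginv n b g i j * g x (b j) * f (b i) = f x := by
  calc ∑ i, ∑ j, ginv n b g i j * g x (b j) * f (b i)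
      = ∑ i, b.repr x i * f (b i) := by
        refine Finset.sum_congr rfl fun i _ => ?_
        rw [← Finset.sum_mul]
        congr 1
        calc ∑ j, ginv n b g i j * g x (b j)
            = ∑ j, ginv n b g j i * g (b j) x := by
              refine Finset.sum_congr rfl fun j _ => ?_
              rw [S.gs i j, S.hgs x (b j)]
          _ = b.repr x i := ginv_g n b g S x i
    _ = f x := by
        conv_rhs => rw [← b.sum_repr x]
        exact (hf.sum' _ _ _).symm

lemma swap2 (S : Setup n b g) (A : Fin n → Fin n → ℝ) :
    ∑ i, ∑ j, ginv n b g i j * A i j = ∑ i, ∑ j, ginv n b g i j * A j i := by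
  rw [Finset.sum_comm]
  exact Finset.sum_congr rfl fun i _ => Finset.sum_congr rfl fun j _ => by rw [S.gs]

lemma trg_g (S : Setup n b g) : trg n b g g = n := by
  show ∑ i, ∑ j, ginv n b g i j * g (b i) (b j) = (n : ℝ)
  calc ∑ i, ∑ j, ginv n b g i j * g (b i) (b j)
      = ∑ i, ((ginv n b g) * (Matrix.of fun i j => g (b i) (b j))) i i := by
        refine Finset.sum_congr rfl fun i _ => ?_
        rw [Matrix.mul_apply]
        exact Finset.sum_congr rfl fun j _ => by
          rw [Matrix.of_apply, S.hgs (b i) (b j)]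
    _ = ∑ i, (1 : Matrix (Fin n) (Fin n) ℝ) i i := by rw [S.hGi]
    _ = n := by simp
lemma IsLin.subf {f f' : V → ℝ} (hf : IsLin f) (hf' : IsLin f') :
    IsLin (fun x => f x - f' x) := by
  refine ⟨fun x y => ?_, fun d x => ?_⟩
  · simp only [hf.1, hf'.1]; ring
  · simp only [hf.2, hf'.2]; ring

lemma IsLin.divf {f : V → ℝ} (hf : IsLin f) (c : ℝ) : IsLin (fun x => f x / c) := by
  refine ⟨fun x y => ?_, fun d x => ?_⟩
  · simp only [hf.1]; ring
  · simp only [hf.2]; ring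

lemma IsBilin.add' {h k : V → V → ℝ} (hh : IsBilin h) (hk : IsBilin k) :
    IsBilin (h + k) :=
  ⟨fun y => (hh.1 y).addf (hk.1 y), fun x => (hh.2 x).addf (hk.2 x)⟩

lemma IsBilin.sub' {h k : V → V → ℝ} (hh : IsBilin h) (hk : IsBilin k) :
    IsBilin (h - k) :=
  ⟨fun y => (hh.1 y).subf (hk.1 y), fun x => (hh.2 x).subf (hk.2 x)⟩

lemma IsBilin.smul' {h : V → V → ℝ} (hh : IsBilin h) (c : ℝ) : IsBilin (c • h) :=
  ⟨fun y => (hh.1 y).const_mul c, fun x => (hh.2 x).const_mul c⟩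

lemma IsBilin.symB' {h : V → V → ℝ} (hh : IsBilin h) : IsBilin (symB h) :=
  ⟨fun y => ((hh.1 y).addf (hh.2 y)).divf 2, fun x => ((hh.2 x).addf (hh.1 x)).divf 2⟩

lemma IsBilin.lamB' {h : V → V → ℝ} (hh : IsBilin h) : IsBilin (lamB h) :=
  ⟨fun y => ((hh.1 y).subf (hh.2 y)).divf 2, fun x => ((hh.2 x).subf (hh.1 x)).divf 2⟩

lemma isBilin_Ric {F : V → V → V → V → ℝ} (hF : IsMulti4 F) :
    IsBilin (Ric n b g F) := by
  constructor
  · intro y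
    exact isLin_finsum _ _ fun i _ => isLin_finsum _ _ fun j _ =>
      (hF.2.1 (b i) y (b j)).const_mul _
  · intro x
    exact isLin_finsum _ _ fun i _ => isLin_finsum _ _ fun j _ =>
      (hF.2.2.1 (b i) x (b j)).const_mul _

lemma isBilin_RicS {F : V → V → V → V → ℝ} (hF : IsMulti4 F) :
    IsBilin (RicS n b g F) := by
  constructor
  · intro y
    exact isLin_finsum _ _ fun i _ => isLin_finsum _ _ fun j _ =>
      (hF.1 (b i) (b j) y).const_mul _
  · intro x
    exact isLin_finsum _ _ fun i _ => isLin_finsum _ _ fun j _ =>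
      (hF.2.2.2 x (b i) (b j)).const_mul _

lemma dsum_sub (A B : Fin n → Fin n → ℝ) :
    (∑ i, ∑ j, (A i j - B i j)) = (∑ i, ∑ j, A i j) - (∑ i, ∑ j, B i j) := by
  simp [Finset.sum_sub_distrib]

lemma dsum_add (A B : Fin n → Fin n → ℝ) :
    (∑ i, ∑ j, (A i j + B i j)) = (∑ i, ∑ j, A i j) + (∑ i, ∑ j, B i j) := by
  simp [Finset.sum_add_distrib]

lemma dsum_constmul (c : ℝ) (A : Fin n → Fin n → ℝ) :
    (∑ i, ∑ j, c * A i j) = c * ∑ i, ∑ j, A i j := by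
  simp [Finset.mul_sum]

lemma dsum_mulconst (c : ℝ) (A : Fin n → Fin n → ℝ) :
    (∑ i, ∑ j, A i j * c) = (∑ i, ∑ j, A i j) * c := by
  simp [Finset.sum_mul]

lemma dsum_div (c : ℝ) (A : Fin n → Fin n → ℝ) :
    (∑ i, ∑ j, A i j / c) = (∑ i, ∑ j, A i j) / c := by
  simp [Finset.sum_div]

lemma RicS_add (A B : V → V → V → V → ℝ) :
    RicS n b g (A + B) = RicS n b g A + RicS n b g B := by
  funext x y
  show ∑ i, ∑ j, ginv n b g i j * (A x (b i) (b j) y + B x (b i) (b j) y)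
    = (∑ i, ∑ j, ginv n b g i j * A x (b i) (b j) y)
      + ∑ i, ∑ j, ginv n b g i j * B x (b i) (b j) y
  rw [← dsum_add]
  exact Finset.sum_congr rfl fun i _ => Finset.sum_congr rfl fun j _ => by ring

lemma RicS_sub (A B : V → V → V → V → ℝ) :
    RicS n b g (A - B) = RicS n b g A - RicS n b g B := by
  funext x y
  show ∑ i, ∑ j, ginv n b g i j * (A x (b i) (b j) y - B x (b i) (b j) y)
    = (∑ i, ∑ j, ginv n b g i j * A x (b i) (b j) y)
      - ∑ i, ∑ j, ginv n b g i j * B x (b i) (b j) y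
  rw [← dsum_sub]
  exact Finset.sum_congr rfl fun i _ => Finset.sum_congr rfl fun j _ => by ring

lemma RicS_smul (c : ℝ) (A : V → V → V → V → ℝ) :
    RicS n b g (c • A) = c • RicS n b g A := by
  funext x y
  show ∑ i, ∑ j, ginv n b g i j * (c * A x (b i) (b j) y)
    = c * ∑ i, ∑ j, ginv n b g i j * A x (b i) (b j) y
  rw [← dsum_constmul]
  exact Finset.sum_congr rfl fun i _ => Finset.sum_congr rfl fun j _ => by ring

lemma RicS_wedge (S : Setup n b g) (t : ℝ) (h : V → V → ℝ) (hh : IsBilin h) :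
    RicS n b g (wedge t h g)
      = fun x y => (1 - t * ((n : ℝ) - 1)) * h x y - trg n b g h * g x y := by
  funext x y
  have h1 : ∑ i, ∑ j, ginv n b g i j * g (b i) y * h x (b j) = h x y :=
    dual n b g S (fun v => h x v) (hh.2 x) y
  have h2 : ∑ i, ∑ j, ginv n b g i j * h (b i) (b j) = trg n b g h := rfl
  have h3 : ∑ i, ∑ j, ginv n b g i j * g (b i) (b j) = (n : ℝ) := trg_g n b g S
  have h4 : ∑ i, ∑ j, ginv n b g i j * g x (b j) * h (b i) y = h x y :=
    dual2 n b g S (fun v => h v y) (hh.1 y) x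
  show ∑ i, ∑ j, ginv n b g i j *
      (h x (b j) * g (b i) y - h (b i) (b j) * g x y
        - t * (h x y * g (b i) (b j) - h (b i) y * g x (b j)))
    = (1 - t * ((n : ℝ) - 1)) * h x y - trg n b g h * g x y
  calc ∑ i, ∑ j, ginv n b g i j *
      (h x (b j) * g (b i) y - h (b i) (b j) * g x y
        - t * (h x y * g (b i) (b j) - h (b i) y * g x (b j)))
      = ∑ i, ∑ j, ((ginv n b g i j * g (b i) y * h x (b j)
          - (ginv n b g i j * h (b i) (b j)) * g x y)
          - ((ginv n b g i j * g (b i) (b j)) * (t * h x y)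
             - (ginv n b g i j * g x (b j) * h (b i) y) * t)) :=
        Finset.sum_congr rfl fun i _ => Finset.sum_congr rfl fun j _ => by ring
    _ = ((∑ i, ∑ j, ginv n b g i j * g (b i) y * h x (b j))
          - (∑ i, ∑ j, ginv n b g i j * h (b i) (b j)) * g x y)
          - ((∑ i, ∑ j, ginv n b g i j * g (b i) (b j)) * (t * h x y)
             - (∑ i, ∑ j, ginv n b g i j * g x (b j) * h (b i) y) * t) := by
        rw [dsum_sub, dsum_sub, dsum_sub, dsum_mulconst, dsum_mulconst, dsum_mulconst]
    _ = (1 - t * ((n : ℝ) - 1)) * h x y - trg n b g h * g x y := by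
        rw [h1, h2, h3, h4]; ring

lemma RicS_prodB (S : Setup n b g) (h : V → V → ℝ) (hh : IsBilin h) :
    RicS n b g (prodB h g) = h := by
  funext x y
  show ∑ i, ∑ j, ginv n b g i j * (h x (b i) * g (b j) y) = h x y
  calc ∑ i, ∑ j, ginv n b g i j * (h x (b i) * g (b j) y)
      = ∑ i, ∑ j, ginv n b g i j * g y (b j) * h x (b i) :=
        Finset.sum_congr rfl fun i _ => Finset.sum_congr rfl fun j _ => by
          rw [S.hgs (b j) y]; ring
    _ = h x y := dual2 n b g S (fun v => h x v) (hh.2 x) y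
section CurvCon

variable {F : V → V → V → V → ℝ}

lemma conC (S : Setup n b g) (x y : V) :
    ∑ i, ∑ j, ginv n b g i j * F (b j) y x (b i) = Ric n b g F y x :=
  swap2 n b g S (fun i j => F (b j) y x (b i))

lemma conD (S : Setup n b g) (x y : V) :
    ∑ i, ∑ j, ginv n b g i j * F y (b j) (b i) x = RicS n b g F y x :=
  swap2 n b g S (fun i j => F y (b j) (b i) x)

lemma conE (hF : F ∈ rSet V) (x y : V) :
    ∑ i, ∑ j, ginv n b g i j * F x (b i) y (b j) = -(Ric n b g F x y) := by
  calc ∑ i, ∑ j, ginv n b g i j * F x (b i) y (b j)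
      = ∑ i, ∑ j, -(ginv n b g i j * F (b i) x y (b j)) :=
        Finset.sum_congr rfl fun i _ => Finset.sum_congr rfl fun j _ => by
          rw [hF.2.1 x (b i) y (b j)]; ring
    _ = -(Ric n b g F x y) := by
        simp [Ric]

lemma conG (S : Setup n b g) (hF : F ∈ rSet V) (x y : V) :
    ∑ i, ∑ j, ginv n b g i j * F x (b j) y (b i) = -(Ric n b g F x y) := by
  have h := swap2 n b g S (fun i j => F x (b j) y (b i))
  rw [h]
  exact conE n b g hF x y

lemma conF (S : Setup n b g) (hF : F ∈ rSet V) (x y : V) :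
    ∑ i, ∑ j, ginv n b g i j * F x y (b j) (b i)
      = Ric n b g F y x - Ric n b g F x y := by
  have h := swap2 n b g S (fun i j => F x y (b j) (b i))
  rw [h]
  calc ∑ i, ∑ j, ginv n b g i j * F x y (b i) (b j)
      = ∑ i, ∑ j, (-(ginv n b g i j * F y (b i) x (b j))
          - ginv n b g i j * F (b i) x y (b j)) :=
        Finset.sum_congr rfl fun i _ => Finset.sum_congr rfl fun j _ => by
          have hb := hF.2.2 x y (b i) (b j)
          have : F x y (b i) (b j) = -F y (b i) x (b j) - F (b i) x y (b j) := by linarith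
          rw [this]; ring
    _ = (∑ i, ∑ j, -(ginv n b g i j * F y (b i) x (b j)))
        - ∑ i, ∑ j, ginv n b g i j * F (b i) x y (b j) := dsum_sub n _ _
    _ = Ric n b g F y x - Ric n b g F x y := by
        have h1 : ∑ i, ∑ j, -(ginv n b g i j * F y (b i) x (b j))
            = -∑ i, ∑ j, ginv n b g i j * F y (b i) x (b j) := by simp
        rw [h1, conE n b g hF y x]
        have h2 : ∑ i, ∑ j, ginv n b g i j * F (b i) x y (b j) = Ric n b g F x y := rfl
        rw [h2]; ring

lemma conH (S : Setup n b g) (hF : F ∈ rSet V) (x y : V) :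
    ∑ i, ∑ j, ginv n b g i j * F (b j) (b i) y x = 0 := by
  have h1 := swap2 n b g S (fun i j => F (b j) (b i) y x)
  have h2 : ∑ i, ∑ j, ginv n b g i j * F (b i) (b j) y x
      = -∑ i, ∑ j, ginv n b g i j * F (b j) (b i) y x := by
    calc ∑ i, ∑ j, ginv n b g i j * F (b i) (b j) y x
        = ∑ i, ∑ j, -(ginv n b g i j * F (b j) (b i) y x) :=
          Finset.sum_congr rfl fun i _ => Finset.sum_congr rfl fun j _ => by
            rw [hF.2.1 (b i) (b j) y x]; ring
      _ = -∑ i, ∑ j, ginv n b g i j * F (b j) (b i) y x := by simp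
  simp only [h2] at h1
  linarith

lemma RicS_psi (S : Setup n b g) (hF : F ∈ rSet V) :
    RicS n b g (psi F) = fun x y =>
      (RicS n b g F x y + Ric n b g F x y + Ric n b g F y x + RicS n b g F y x) / 4 := by
  funext x y
  show ∑ i, ∑ j, ginv n b g i j *
      ((F x (b i) (b j) y + F (b i) x y (b j) + F (b j) y x (b i) + F y (b j) (b i) x) / 4)
    = (RicS n b g F x y + Ric n b g F x y + Ric n b g F y x + RicS n b g F y x) / 4
  calc ∑ i, ∑ j, ginv n b g i j *
      ((F x (b i) (b j) y + F (b i) x y (b j) + F (b j) y x (b i) + F y (b j) (b i) x) / 4)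
      = ∑ i, ∑ j, ((ginv n b g i j * F x (b i) (b j) y + ginv n b g i j * F (b i) x y (b j)
          + ginv n b g i j * F (b j) y x (b i) + ginv n b g i j * F y (b j) (b i) x) / 4) :=
        Finset.sum_congr rfl fun i _ => Finset.sum_congr rfl fun j _ => by ring
    _ = ((∑ i, ∑ j, ginv n b g i j * F x (b i) (b j) y)
          + (∑ i, ∑ j, ginv n b g i j * F (b i) x y (b j))
          + (∑ i, ∑ j, ginv n b g i j * F (b j) y x (b i))
          + (∑ i, ∑ j, ginv n b g i j * F y (b j) (b i) x)) / 4 := by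
        rw [dsum_div, dsum_add, dsum_add, dsum_add]
    _ = (RicS n b g F x y + Ric n b g F x y + Ric n b g F y x + RicS n b g F y x) / 4 := by
        rw [conC n b g S x y, conD n b g S x y]
        rfl

lemma RicS_mu (S : Setup n b g) (hF : F ∈ rSet V) :
    RicS n b g (mu F) = fun x y =>
      (3 * RicS n b g F x y + RicS n b g F y x
        - 5 * Ric n b g F x y + Ric n b g F y x) / 8 := by
  funext x y
  show ∑ i, ∑ j, ginv n b g i j *
      ((3 * F x (b i) (b j) y + 3 * F x (b i) y (b j) + F x y (b j) (b i)
        + F x (b j) y (b i) + F y (b i) (b j) x + F (b j) (b i) y x) / 8)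
    = (3 * RicS n b g F x y + RicS n b g F y x
        - 5 * Ric n b g F x y + Ric n b g F y x) / 8
  calc ∑ i, ∑ j, ginv n b g i j *
      ((3 * F x (b i) (b j) y + 3 * F x (b i) y (b j) + F x y (b j) (b i)
        + F x (b j) y (b i) + F y (b i) (b j) x + F (b j) (b i) y x) / 8)
      = ∑ i, ∑ j, ((3 * (ginv n b g i j * F x (b i) (b j) y)
          + 3 * (ginv n b g i j * F x (b i) y (b j))
          + ginv n b g i j * F x y (b j) (b i)
          + ginv n b g i j * F x (b j) y (b i)
          + ginv n b g i j * F y (b i) (b j) x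
          + ginv n b g i j * F (b j) (b i) y x) / 8) :=
        Finset.sum_congr rfl fun i _ => Finset.sum_congr rfl fun j _ => by ring
    _ = (3 * (∑ i, ∑ j, ginv n b g i j * F x (b i) (b j) y)
          + 3 * (∑ i, ∑ j, ginv n b g i j * F x (b i) y (b j))
          + (∑ i, ∑ j, ginv n b g i j * F x y (b j) (b i))
          + (∑ i, ∑ j, ginv n b g i j * F x (b j) y (b i))
          + (∑ i, ∑ j, ginv n b g i j * F y (b i) (b j) x)
          + (∑ i, ∑ j, ginv n b g i j * F (b j) (b i) y x)) / 8 := by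
        rw [dsum_div, dsum_add, dsum_add, dsum_add, dsum_add, dsum_add,
          dsum_constmul, dsum_constmul]
    _ = (3 * RicS n b g F x y + RicS n b g F y x
        - 5 * Ric n b g F x y + Ric n b g F y x) / 8 := by
        rw [conE n b g hF x y, conF n b g S hF x y, conG n b g S hF x y,
          conH n b g S hF x y]
        have h1 : ∑ i, ∑ j, ginv n b g i j * F x (b i) (b j) y = RicS n b g F x y := rfl
        have h5 : ∑ i, ∑ j, ginv n b g i j * F y (b i) (b j) x = RicS n b g F y x := rfl
        rw [h1, h5]; ring

end CurvCon

lemma trg_add (h k : V → V → ℝ) : trg n b g (h + k) = trg n b g h + trg n b g k := by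
  show ∑ i, ∑ j, ginv n b g i j * (h (b i) (b j) + k (b i) (b j))
    = (∑ i, ∑ j, ginv n b g i j * h (b i) (b j)) + ∑ i, ∑ j, ginv n b g i j * k (b i) (b j)
  rw [← dsum_add]
  exact Finset.sum_congr rfl fun i _ => Finset.sum_congr rfl fun j _ => by ring

lemma trg_sub (h k : V → V → ℝ) : trg n b g (h - k) = trg n b g h - trg n b g k := by
  show ∑ i, ∑ j, ginv n b g i j * (h (b i) (b j) - k (b i) (b j))
    = (∑ i, ∑ j, ginv n b g i j * h (b i) (b j)) - ∑ i, ∑ j, ginv n b g i j * k (b i) (b j)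
  rw [← dsum_sub]
  exact Finset.sum_congr rfl fun i _ => Finset.sum_congr rfl fun j _ => by ring

lemma trg_smul (c : ℝ) (h : V → V → ℝ) : trg n b g (c • h) = c * trg n b g h := by
  show ∑ i, ∑ j, ginv n b g i j * (c * h (b i) (b j))
    = c * ∑ i, ∑ j, ginv n b g i j * h (b i) (b j)
  rw [← dsum_constmul]
  exact Finset.sum_congr rfl fun i _ => Finset.sum_congr rfl fun j _ => by ring

lemma trg_zero : trg n b g (0 : V → V → ℝ) = 0 := by
  show ∑ i : Fin n, ∑ j : Fin n, ginv n b g i j * (0 : ℝ) = 0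
  simp

lemma trg_symB (S : Setup n b g) (h : V → V → ℝ) : trg n b g (symB h) = trg n b g h := by
  have hs := swap2 n b g S (fun i j => h (b i) (b j))
  show ∑ i, ∑ j, ginv n b g i j * ((h (b i) (b j) + h (b j) (b i)) / 2) = _
  calc ∑ i, ∑ j, ginv n b g i j * ((h (b i) (b j) + h (b j) (b i)) / 2)
      = ∑ i, ∑ j, ((ginv n b g i j * h (b i) (b j) + ginv n b g i j * h (b j) (b i)) / 2) :=
        Finset.sum_congr rfl fun i _ => Finset.sum_congr rfl fun j _ => by ring
    _ = ((∑ i, ∑ j, ginv n b g i j * h (b i) (b j))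
        + ∑ i, ∑ j, ginv n b g i j * h (b j) (b i)) / 2 := by rw [dsum_div, dsum_add]
    _ = trg n b g h := by rw [← hs]; show (trg n b g h + trg n b g h) / 2 = _; ring

lemma trg_lamB (S : Setup n b g) (h : V → V → ℝ) : trg n b g (lamB h) = 0 := by
  have hs := swap2 n b g S (fun i j => h (b i) (b j))
  show ∑ i, ∑ j, ginv n b g i j * ((h (b i) (b j) - h (b j) (b i)) / 2) = 0
  calc ∑ i, ∑ j, ginv n b g i j * ((h (b i) (b j) - h (b j) (b i)) / 2)
      = ∑ i, ∑ j, ((ginv n b g i j * h (b i) (b j) - ginv n b g i j * h (b j) (b i)) / 2) :=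
        Finset.sum_congr rfl fun i _ => Finset.sum_congr rfl fun j _ => by ring
    _ = ((∑ i, ∑ j, ginv n b g i j * h (b i) (b j))
        - ∑ i, ∑ j, ginv n b g i j * h (b j) (b i)) / 2 := by rw [dsum_div, dsum_sub]
    _ = 0 := by rw [← hs]; ring

lemma trg_Ric (F : V → V → V → V → ℝ) : trg n b g (Ric n b g F) = tau n b g F := by
  show ∑ i, ∑ j, ginv n b g i j * (∑ k, ∑ l, ginv n b g k l * F (b k) (b i) (b j) (b l))
    = ∑ i, ∑ j, ∑ k, ∑ l, ginv n b g i l * ginv n b g j k * F (b i) (b j) (b k) (b l)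
  calc ∑ i, ∑ j, ginv n b g i j * (∑ k, ∑ l, ginv n b g k l * F (b k) (b i) (b j) (b l))
      = ∑ i, ∑ j, ∑ k, ∑ l, ginv n b g i j * (ginv n b g k l * F (b k) (b i) (b j) (b l)) := by
        refine Finset.sum_congr rfl fun i _ => Finset.sum_congr rfl fun j _ => ?_
        rw [Finset.mul_sum]
        exact Finset.sum_congr rfl fun k _ => by rw [Finset.mul_sum]
    _ = ∑ i, ∑ k, ∑ j, ∑ l, ginv n b g i j * (ginv n b g k l * F (b k) (b i) (b j) (b l)) :=
        Finset.sum_congr rfl fun i _ => Finset.sum_comm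
    _ = ∑ k, ∑ i, ∑ j, ∑ l, ginv n b g i j * (ginv n b g k l * F (b k) (b i) (b j) (b l)) :=
        Finset.sum_comm
    _ = ∑ i, ∑ j, ∑ k, ∑ l, ginv n b g i l * ginv n b g j k * F (b i) (b j) (b k) (b l) :=
        Finset.sum_congr rfl fun k _ => Finset.sum_congr rfl fun i _ =>
          Finset.sum_congr rfl fun j _ => Finset.sum_congr rfl fun l _ => by ring

lemma trg_RicS (F : V → V → V → V → ℝ) : trg n b g (RicS n b g F) = tau n b g F := by
  show ∑ i, ∑ j, ginv n b g i j * (∑ k, ∑ l, ginv n b g k l * F (b i) (b k) (b l) (b j))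
    = ∑ i, ∑ j, ∑ k, ∑ l, ginv n b g i l * ginv n b g j k * F (b i) (b j) (b k) (b l)
  calc ∑ i, ∑ j, ginv n b g i j * (∑ k, ∑ l, ginv n b g k l * F (b i) (b k) (b l) (b j))
      = ∑ i, ∑ j, ∑ k, ∑ l, ginv n b g i j * (ginv n b g k l * F (b i) (b k) (b l) (b j)) := by
        refine Finset.sum_congr rfl fun i _ => Finset.sum_congr rfl fun j _ => ?_
        rw [Finset.mul_sum]
        exact Finset.sum_congr rfl fun k _ => by rw [Finset.mul_sum]
    _ = ∑ i, ∑ k, ∑ j, ∑ l, ginv n b g i j * (ginv n b g k l * F (b i) (b k) (b l) (b j)) :=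
        Finset.sum_congr rfl fun i _ => Finset.sum_comm
    _ = ∑ i, ∑ k, ∑ l, ∑ j, ginv n b g i j * (ginv n b g k l * F (b i) (b k) (b l) (b j)) :=
        Finset.sum_congr rfl fun i _ => Finset.sum_congr rfl fun k _ => Finset.sum_comm
    _ = ∑ i, ∑ j, ∑ k, ∑ l, ginv n b g i l * ginv n b g j k * F (b i) (b j) (b k) (b l) :=
        Finset.sum_congr rfl fun i _ => Finset.sum_congr rfl fun j _ =>
          Finset.sum_congr rfl fun k _ => Finset.sum_congr rfl fun l _ => by ring
theorem stmt8 {V : Type*} [AddCommGroup V] [Module ℝ V]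
    (n : ℕ) (hn : 3 ≤ n) (b : Module.Basis (Fin n) ℝ V)
    (g : V → V → ℝ) (hgb : IsBilin g) (hgs : ∀ x y, g x y = g y x)
    (hgnd : ∀ x : V, (∀ y : V, g x y = 0) → x = 0) :
    ∀ F ∈ rSet V,
      RicS n b g (pi1 n b g F) = ((tau n b g F) / (n : ℝ)) • g ∧
      RicS n b g (pi2 n b g F) =
        ((1 : ℝ) / ((n : ℝ) - 1)) • (((tau n b g F) / (n : ℝ)) • g - symB (Ric n b g F)) ∧
      RicS n b g (pi3 n b g F) = ((-3 : ℝ) / ((n : ℝ) + 1)) • lamB (Ric n b g F) ∧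
      RicS n b g (pi4 n b g F) =
        lamB (RicS n b g F + ((3 : ℝ) / ((n : ℝ) + 1)) • Ric n b g F) ∧
      RicS n b g (pi5 n b g F) = (-(tau n b g F) / ((n : ℝ) - 1)) • g
          + symB (((1 : ℝ) / ((n : ℝ) - 1)) • Ric n b g F + RicS n b g F) ∧
      RicS n b g (pi6 n b g F) = 0 ∧ RicS n b g (pi7 n b g F) = 0 ∧
      RicS n b g (pi8 n b g F) = 0 ∧
      trg n b g (RicS n b g (pi2 n b g F)) = 0 ∧ trg n b g (RicS n b g (pi3 n b g F)) = 0 ∧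
      trg n b g (RicS n b g (pi4 n b g F)) = 0 ∧ trg n b g (RicS n b g (pi5 n b g F)) = 0 ∧
      trg n b g (RicS n b g (pi6 n b g F)) = 0 ∧ trg n b g (RicS n b g (pi7 n b g F)) = 0 ∧
      trg n b g (RicS n b g (pi8 n b g F)) = 0 := by
  intro F hF
  have S : Setup n b g := setup_of n b g hgb hgs hgnd
  have hn3 : (3 : ℝ) ≤ (n : ℝ) := by exact_mod_cast hn
  have n0 : (n : ℝ) ≠ 0 := by linarith
  have n1 : (n : ℝ) - 1 ≠ 0 := by linarith
  have n2 : (n : ℝ) - 2 ≠ 0 := by linarith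
  have np1 : (n : ℝ) + 1 ≠ 0 := by linarith
  have np2 : (n : ℝ) + 2 ≠ 0 := by linarith
  have nsq : (n : ℝ) ^ 2 - 4 ≠ 0 := by nlinarith
  have hbR : IsBilin (Ric n b g F) := isBilin_Ric n b g hF.1
  have hbRs : IsBilin (RicS n b g F) := isBilin_RicS n b g hF.1
  -- trace facts
  have tg : trg n b g g = (n : ℝ) := trg_g n b g S
  have tR : trg n b g (Ric n b g F) = tau n b g F := trg_Ric n b g F
  have tRs : trg n b g (RicS n b g F) = tau n b g F := trg_RicS n b g F
  -- the eight computations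
  have H1 : RicS n b g (pi1 n b g F) = ((tau n b g F) / (n : ℝ)) • g := by
    simp only [pi1]
    rw [RicS_smul, RicS_wedge n b g S 0 g hgb]
    simp only [tg]
    funext x y
    simp only [Pi.smul_apply, smul_eq_mul]
    field_simp
    ring
  have H2 : RicS n b g (pi2 n b g F) =
      ((1 : ℝ) / ((n : ℝ) - 1)) • (((tau n b g F) / (n : ℝ)) • g - symB (Ric n b g F)) := by
    have hbh : IsBilin ((tau n b g F / (n : ℝ)) • g - symB (Ric n b g F)) :=
      (hgb.smul' _).sub' hbR.symB'
    have ht : trg n b g ((tau n b g F / (n : ℝ)) • g - symB (Ric n b g F)) = 0 := by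
      rw [trg_sub, trg_smul, tg, trg_symB n b g S, tR]
      field_simp
      ring
    simp only [pi2]
    rw [RicS_smul, RicS_wedge n b g S 0 _ hbh]
    simp only [ht]
    funext x y
    simp only [Pi.smul_apply, Pi.sub_apply, smul_eq_mul, symB]
    ring
  have H3 : RicS n b g (pi3 n b g F) = ((-3 : ℝ) / ((n : ℝ) + 1)) • lamB (Ric n b g F) := by
    simp only [pi3]
    rw [RicS_smul, RicS_add, RicS_smul, RicS_prodB n b g S _ hbR.lamB',
      RicS_wedge n b g S 0 _ hbR.lamB']
    simp only [trg_lamB n b g S]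
    funext x y
    simp only [Pi.smul_apply, Pi.add_apply, smul_eq_mul, lamB]
    field_simp
    ring
  have H4 : RicS n b g (pi4 n b g F) =
      lamB (RicS n b g F + ((3 : ℝ) / ((n : ℝ) + 1)) • Ric n b g F) := by
    simp only [pi4]
    rw [RicS_sub, RicS_smul, RicS_smul, RicS_add, RicS_add, RicS_smul, RicS_smul,
      RicS_prodB n b g S _ hbRs.lamB', RicS_prodB n b g S _ hbR.lamB',
      RicS_wedge n b g S ((n : ℝ) + 1) _ hbRs.lamB',
      RicS_wedge n b g S ((n : ℝ) + 1) _ hbR.lamB']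
    simp only [trg_lamB n b g S]
    funext x y
    simp only [Pi.smul_apply, Pi.add_apply, Pi.sub_apply, smul_eq_mul, lamB]
    have e : (n : ℝ) ^ 2 - 4 = ((n : ℝ) - 2) * ((n : ℝ) + 2) := by ring
    field_simp
    ring
  have H5 : RicS n b g (pi5 n b g F) = (-(tau n b g F) / ((n : ℝ) - 1)) • g
      + symB (((1 : ℝ) / ((n : ℝ) - 1)) • Ric n b g F + RicS n b g F) := by
    have hbh : IsBilin (symB (Ric n b g F + ((n : ℝ) - 1) • RicS n b g F)) :=
      (hbR.add' (hbRs.smul' _)).symB'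
    have ht : trg n b g (symB (Ric n b g F + ((n : ℝ) - 1) • RicS n b g F))
        = (n : ℝ) * tau n b g F := by
      rw [trg_symB n b g S, trg_add, trg_smul, tR, tRs]; ring
    simp only [pi5]
    rw [RicS_smul, RicS_sub, RicS_smul, RicS_smul, RicS_wedge n b g S 0 g hgb,
      RicS_wedge n b g S ((n : ℝ) - 1) _ hbh]
    simp only [ht, tg]
    funext x y
    simp only [Pi.smul_apply, Pi.add_apply, Pi.sub_apply, smul_eq_mul, symB]
    field_simp
    ring
  have H6 : RicS n b g (pi6 n b g F) = 0 := by
    have hbh : IsBilin (symB (Ric n b g F + RicS n b g F)) := (hbR.add' hbRs).symB'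
    have ht : trg n b g (symB (Ric n b g F + RicS n b g F)) = 2 * tau n b g F := by
      rw [trg_symB n b g S, trg_add, tR, tRs]; ring
    simp only [pi6]
    rw [RicS_sub, RicS_add, RicS_smul, RicS_smul, RicS_psi n b g S hF,
      RicS_wedge n b g S 1 _ hbh, RicS_wedge n b g S 0 g hgb]
    simp only [ht, tg]
    funext x y
    simp only [Pi.smul_apply, Pi.add_apply, Pi.sub_apply, Pi.zero_apply, smul_eq_mul, symB]
    field_simp
    ring
  have H7 : RicS n b g (pi7 n b g F) = 0 := by
    have hbh : IsBilin (symB (Ric n b g F - RicS n b g F)) := (hbR.sub' hbRs).symB'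
    have hbk : IsBilin (lamB ((3 : ℝ) • Ric n b g F - RicS n b g F)) :=
      ((hbR.smul' 3).sub' hbRs).lamB'
    have ht : trg n b g (symB (Ric n b g F - RicS n b g F)) = 0 := by
      rw [trg_symB n b g S, trg_sub, tR, tRs]; ring
    simp only [pi7]
    rw [RicS_add, RicS_add, RicS_add, RicS_smul, RicS_smul, RicS_smul,
      RicS_mu n b g S hF, RicS_wedge n b g S (-1) _ hbh,
      RicS_prodB n b g S _ hbk, RicS_wedge n b g S (-1) _ hbk]
    simp only [ht, trg_lamB n b g S]
    funext x y
    simp only [Pi.smul_apply, Pi.add_apply, Pi.sub_apply, Pi.zero_apply, smul_eq_mul,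
      symB, lamB]
    field_simp
    ring
  have H8 : RicS n b g (pi8 n b g F) = 0 := by
    have hbm : IsBilin (lamB (Ric n b g F + RicS n b g F)) := (hbR.add' hbRs).lamB'
    simp only [pi8]
    rw [RicS_add, RicS_add, RicS_sub, RicS_sub, RicS_smul, RicS_smul,
      RicS_psi n b g S hF, RicS_mu n b g S hF,
      RicS_prodB n b g S _ hbm, RicS_wedge n b g S 3 _ hbm]
    simp only [trg_lamB n b g S]
    funext x y
    simp only [Pi.smul_apply, Pi.add_apply, Pi.sub_apply, Pi.zero_apply, smul_eq_mul, lamB]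
    field_simp
    ring
  -- traces
  have T2 : trg n b g (RicS n b g (pi2 n b g F)) = 0 := by
    rw [H2, trg_smul, trg_sub, trg_smul, tg, trg_symB n b g S, tR]
    field_simp
    ring
  have T3 : trg n b g (RicS n b g (pi3 n b g F)) = 0 := by
    rw [H3, trg_smul, trg_lamB n b g S]; ring
  have T4 : trg n b g (RicS n b g (pi4 n b g F)) = 0 := by
    rw [H4, trg_lamB n b g S]
  have T5 : trg n b g (RicS n b g (pi5 n b g F)) = 0 := by
    rw [H5, trg_add, trg_smul, tg, trg_symB n b g S, trg_add, trg_smul, tR, tRs]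
    field_simp
    ring
  have T6 : trg n b g (RicS n b g (pi6 n b g F)) = 0 := by rw [H6]; exact trg_zero n b g
  have T7 : trg n b g (RicS n b g (pi7 n b g F)) = 0 := by rw [H7]; exact trg_zero n b g
  have T8 : trg n b g (RicS n b g (pi8 n b g F)) = 0 := by rw [H8]; exact trg_zero n b g
  exact ⟨H1, H2, H3, H4, H5, H6, H7, H8, T2, T3, T4, T5, T6, T7, T8⟩

end GCT
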